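/- Let m be an odd positive integer, F = 𝔽_{2^m}, and let f : F → F with f(0) = 0. If the Preparata-like code P_f has minimum distance 5 (i.e., any two distinct codewords (S,T), (S′,T′) satisfy |S △ S′| + |T △ T′| ≥ 5), then f is crooked. -/

import Mathlib

open scoped symmDiff
open Finset

private lemma sum_symmDiff_eq {F : Type*} [Field F] [DecidableEq F]
    (htwo : ∀ v : F, v + v = 0) (g : F → F) (s t : Finset F) :
    (∑ u ∈ s ∆ t, g u) = (∑ u ∈ s, g u) + (∑ u ∈ t, g u) := by
  have hdisj : Disjoint (s ∆ t) (s ∩ t) := by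
    have := disjoint_symmDiff_inf s t
    simpa using this
  have hunion : (s ∆ t) ∪ (s ∩ t) = s ∪ t := by
    have := symmDiff_sup_inf s t
    simpa using this
  have h1 : (∑ u ∈ (s ∆ t) ∪ (s ∩ t), g u) = (∑ u ∈ s ∆ t, g u) + (∑ u ∈ s ∩ t, g u) :=
    Finset.sum_union hdisj
  have h2 : ((∑ u ∈ s ∪ t, g u) + (∑ u ∈ s ∩ t, g u)) = (∑ u ∈ s, g u) + (∑ u ∈ t, g u) :=
    Finset.sum_union_inter
  rw [hunion] at h1
  linear_combination h2 - h1 - htwo (∑ u ∈ s ∩ t, g u)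

private lemma card_symmDiff_add {α : Type*} [DecidableEq α] (s t : Finset α) :
    (s ∆ t).card + 2 * (s ∩ t).card = s.card + t.card := by
  have h1 : s ∆ t = (s ∪ t) \ (s ∩ t) := by
    have := symmDiff_eq_sup_sdiff_inf (a := s) (b := t)
    simpa using this
  have hsub : s ∩ t ⊆ s ∪ t := (Finset.inter_subset_left).trans Finset.subset_union_left
  have h2 : ((s ∪ t) \ (s ∩ t)).card + (s ∩ t).card = (s ∪ t).card :=
    Finset.card_sdiff_add_card_eq_card hsub
  have h3 : (s ∪ t).card + (s ∩ t).card = s.card + t.card := Finset.card_union_add_card_inter s t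
  rw [h1]
  omega

private lemma two_mul_card_image {F : Type*} [Field F] [DecidableEq F]
    (c : F) (s : Finset F) (g : F → F)
    (hcl : ∀ u ∈ s, u + c ∈ s)
    (hg : ∀ u, g (u + c) = g u)
    (hfib : ∀ u ∈ s, ∀ w ∈ s, g u = g w → w = u ∨ w = u + c)
    (hne : ∀ u : F, u ≠ u + c) :
    s.card = 2 * (s.image g).card := by
  have key : ∀ b ∈ s.image g, (s.filter (fun u => g u = b)).card = 2 := by
    intro b hb
    obtain ⟨u0, hu0, hgu0⟩ := Finset.mem_image.mp hb
    have hset : s.filter (fun u => g u = b) = {u0, u0 + c} := by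
      ext w
      simp only [Finset.mem_filter, Finset.mem_insert, Finset.mem_singleton]
      constructor
      · rintro ⟨hws, hgw⟩
        exact hfib u0 hu0 w hws (by rw [hgu0, hgw])
      · rintro (rfl | rfl)
        · exact ⟨hu0, hgu0⟩
        · exact ⟨hcl u0 hu0, by rw [hg, hgu0]⟩
    rw [hset, Finset.card_pair (hne u0)]
  calc s.card = ∑ b ∈ s.image g, (s.filter fun u => g u = b).card :=
        Finset.card_eq_sum_card_image g s
    _ = ∑ _b ∈ s.image g, 2 := Finset.sum_congr rfl key
    _ = 2 * (s.image g).card := by rw [Finset.sum_const, smul_eq_mul, mul_comm]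


/-- `f` is crooked: `f 0 = 0`; `f x + f y + f z ≠ f (x+y+z)` for pairwise
distinct `x, y, z`; and `f x + f y + f z ≠ f (x+a) + f (y+a) + f (z+a)`
for every `a ≠ 0`. -/
def IsCrooked {F : Type*} [Field F] (f : F → F) : Prop :=
  f 0 = 0 ∧
  (∀ x y z : F, x ≠ y → x ≠ z → y ≠ z → f x + f y + f z ≠ f (x + y + z)) ∧
  (∀ x y z a : F, a ≠ 0 → f x + f y + f z ≠ f (x + a) + f (y + a) + f (z + a))

/-- The Preparata-like code `P_f`: pairs `(S, T)` with `S ⊆ F \ {0}`, `T ⊆ F`,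
`|T|` even, `∑_{r∈S} r = ∑_{r∈T} r`, and
`f (∑_{r∈S} r) = ∑_{r∈S} f r + ∑_{r∈T} f r`. -/
def preparataCode {F : Type*} [Field F] [DecidableEq F] (f : F → F) :
    Set (Finset F × Finset F) :=
  {ST | (0 : F) ∉ ST.1 ∧ Even ST.2.card ∧
    (∑ r ∈ ST.1, r) = (∑ r ∈ ST.2, r) ∧
    f (∑ r ∈ ST.1, r) = (∑ r ∈ ST.1, f r) + (∑ r ∈ ST.2, f r)}

/-- If `P_f` has minimum distance `5` (any two distinct codewords are at
distance at least `5`), then `f` is crooked. -/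
theorem crooked_of_preparata_min_dist_five {m : ℕ} (hm : 0 < m) (hmodd : Odd m)
    {F : Type*} [Field F] [Fintype F] [DecidableEq F]
    (hcard : Fintype.card F = 2 ^ m)
    (f : F → F) (hf0 : f 0 = 0)
    (hdist : ∀ ST ∈ preparataCode f, ∀ ST' ∈ preparataCode f, ST ≠ ST' →
      5 ≤ (ST.1 ∆ ST'.1).card + (ST.2 ∆ ST'.2).card) :
    IsCrooked f := by
  classical
  -- characteristic 2
  have hchar : (2 : F) = 0 := by
    have h := FiniteField.cast_card_eq_zero F
    rw [hcard] at h
    push_cast at h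
    exact (pow_eq_zero_iff hm.ne').mp h
  have htwo : ∀ v : F, v + v = 0 := by
    intro v
    have : (2 : F) * v = 0 := by rw [hchar, zero_mul]
    linear_combination this
  have hneadd : ∀ (u c : F), c ≠ 0 → u ≠ u + c := by
    intro u c hc h
    exact hc (by linear_combination -h)
  -- the zero codeword
  have hempty : ((∅, ∅) : Finset F × Finset F) ∈ preparataCode f := by
    simp only [preparataCode, Set.mem_setOf_eq]
    refine ⟨by simp, by simp, by simp, by simp [hf0]⟩
  -- injectivity
  have hinj : Function.Injective f := by
    intro b c hbc
    by_contra hne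
    have hbc0 : b + c ≠ 0 := fun h => hne (by linear_combination h - htwo c)
    have hC : (({b + c}, {b, c}) : Finset F × Finset F) ∈ preparataCode f := by
      simp only [preparataCode, Set.mem_setOf_eq]
      refine ⟨by simp [Ne.symm hbc0], ?_, ?_, ?_⟩
      · rw [Finset.card_pair hne]; exact even_two
      · rw [Finset.sum_singleton, Finset.sum_pair hne]
      · rw [Finset.sum_singleton, Finset.sum_singleton, Finset.sum_pair hne]
        linear_combination -hbc - htwo (f c)
    have h5 := hdist _ hC (∅, ∅) hempty (by simp)
    simp only [← Finset.bot_eq_empty, symmDiff_bot] at h5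
    rw [Finset.card_singleton, Finset.card_pair hne] at h5
    omega
  -- APN / condition (2)
  have hAPN : ∀ x y z : F, x ≠ y → x ≠ z → y ≠ z → f x + f y + f z ≠ f (x + y + z) := by
    intro x y z hxy hxz hyz heq
    have h1 : x + y + z ≠ x := fun h => hyz (by linear_combination h - htwo z)
    have h2 : x + y + z ≠ y := fun h => hxz (by linear_combination h - htwo z)
    have h3 : x + y + z ≠ z := fun h => hxy (by linear_combination h - htwo y)
    have hz : z ∉ ({x + y + z} : Finset F) := by simp [Ne.symm h3]
    have hy : y ∉ (insert z {x + y + z} : Finset F) := by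
      simp [hyz, Ne.symm h2]
    have hx : x ∉ (insert y (insert z {x + y + z}) : Finset F) := by
      simp [hxy, hxz, Ne.symm h1]
    have hC : ((∅, ({x, y, z, x + y + z} : Finset F)) : Finset F × Finset F) ∈ preparataCode f := by
      simp only [preparataCode, Set.mem_setOf_eq]
      refine ⟨by simp, ?_, ?_, ?_⟩
      · rw [Finset.card_insert_of_notMem hx, Finset.card_insert_of_notMem hy,
          Finset.card_insert_of_notMem hz, Finset.card_singleton]
        decide
      · rw [Finset.sum_empty, Finset.sum_insert hx, Finset.sum_insert hy,
          Finset.sum_insert hz, Finset.sum_singleton]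
        linear_combination -htwo x - htwo y - htwo z
      · rw [Finset.sum_empty, Finset.sum_insert hx, Finset.sum_insert hy,
          Finset.sum_insert hz, Finset.sum_singleton, Finset.sum_empty, hf0]
        linear_combination -heq - htwo (f (x + y + z))
    have h5 := hdist _ hC (∅, ∅) hempty (by simp)
    simp only [← Finset.bot_eq_empty, symmDiff_bot] at h5
    rw [Finset.card_insert_of_notMem hx, Finset.card_insert_of_notMem hy,
      Finset.card_insert_of_notMem hz, Finset.card_singleton] at h5
    simp only [Finset.bot_eq_empty, Finset.card_empty] at h5
    omega
  -- fibers of derivative maps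
  have hfib : ∀ c : F, c ≠ 0 → ∀ u w : F,
      f u + f (u + c) = f w + f (w + c) → w = u ∨ w = u + c := by
    intro c hc u w h
    by_cases h1 : w = u
    · exact Or.inl h1
    by_cases h2 : w = u + c
    · exact Or.inr h2
    exfalso
    refine hAPN u (u + c) w (hneadd u c hc) (Ne.symm h1) (Ne.symm h2) ?_
    have harg : u + (u + c) + w = w + c := by linear_combination htwo u
    rw [harg]
    linear_combination h + htwo (f w)
  -- the (2,2)-codeword exclusion
  have hstar : ∀ c : F, c ≠ 0 → ∀ u : F, u ≠ 0 → u ≠ c → ∀ w : F,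
      f c + f u + f (u + c) ≠ f w + f (w + c) := by
    intro c hc u hu0 huc w heq
    have huuc : u ≠ u + c := hneadd u c hc
    have hwwc : w ≠ w + c := hneadd w c hc
    have hC : ((({u, u + c}, {w, w + c}) : Finset F × Finset F)) ∈ preparataCode f := by
      simp only [preparataCode, Set.mem_setOf_eq]
      refine ⟨?_, ?_, ?_, ?_⟩
      · simp only [Finset.mem_insert, Finset.mem_singleton]
        push_neg
        exact ⟨Ne.symm hu0, fun h => huc (by linear_combination -h - htwo c)⟩
      · rw [Finset.card_pair hwwc]; exact even_two
      · rw [Finset.sum_pair huuc, Finset.sum_pair hwwc]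
        linear_combination htwo u - htwo w
      · rw [Finset.sum_pair huuc, Finset.sum_pair huuc, Finset.sum_pair hwwc]
        have harg : u + (u + c) = c := by linear_combination htwo u
        rw [harg]
        linear_combination heq - htwo (f u) - htwo (f (u + c))
    have h5 := hdist _ hC (∅, ∅) hempty (by simp)
    simp only [← Finset.bot_eq_empty, symmDiff_bot] at h5
    rw [Finset.card_pair huuc, Finset.card_pair hwwc] at h5
    omega
  -- partition of nonzero field elements
  have hBV : ∀ c : F, c ≠ 0 → ∀ τ : F, τ ≠ 0 →
      (∃ u, f u + f (u + c) = τ) ∨ (∃ u, u ≠ 0 ∧ u ≠ c ∧ f c + f u + f (u + c) = τ) := by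
    intro c hc τ hτ
    have hcc : ∀ u : F, u + c + c = u := by intro u; linear_combination htwo c
    have hne2 : ∀ u : F, u ≠ u + c := fun u => hneadd u c hc
    have hB := two_mul_card_image c Finset.univ (fun u => f u + f (u + c))
      (fun u _ => Finset.mem_univ _)
      (fun u => by show f (u + c) + f (u + c + c) = f u + f (u + c); rw [hcc u, add_comm])
      (fun u _ w _ h => hfib c hc u w h) hne2
    have hcl2 : ∀ u ∈ Finset.univ \ ({0, c} : Finset F), u + c ∈ Finset.univ \ ({0, c} : Finset F) := by
      intro u hu
      simp only [Finset.mem_sdiff, Finset.mem_insert, Finset.mem_singleton] at hu ⊢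
      push_neg at hu ⊢
      obtain ⟨-, hu1, hu2⟩ := hu
      refine ⟨Finset.mem_univ _, ?_, ?_⟩
      · intro h; exact hu2 (by linear_combination h - htwo c)
      · intro h; exact hu1 (by linear_combination h)
    have hV := two_mul_card_image c (Finset.univ \ ({0, c} : Finset F))
      (fun u => f c + f u + f (u + c)) hcl2
      (fun u => by show f c + f (u + c) + f (u + c + c) = f c + f u + f (u + c); rw [hcc u]; ring)
      (fun u _ w _ h => hfib c hc u w
        (by linear_combination (h : f c + f u + f (u + c) = f c + f w + f (w + c)))) hne2
    have hs2card : (Finset.univ \ ({0, c} : Finset F)).card = 2 ^ m - 2 := by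
      rw [Finset.card_sdiff_of_subset (Finset.subset_univ _), Finset.card_univ, hcard,
        Finset.card_pair (Ne.symm hc)]
    have hdisjBV : Disjoint (Finset.univ.image (fun u => f u + f (u + c)))
        ((Finset.univ \ ({0, c} : Finset F)).image (fun u => f c + f u + f (u + c))) := by
      rw [Finset.disjoint_left]
      intro b hb1 hb2
      obtain ⟨w, -, hw⟩ := Finset.mem_image.mp hb1
      obtain ⟨u, hu, hgu⟩ := Finset.mem_image.mp hb2
      simp only [Finset.mem_sdiff, Finset.mem_insert, Finset.mem_singleton] at hu
      push_neg at hu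
      exact hstar c hc u hu.2.1 hu.2.2 w (by rw [hgu, ← hw])
    have hsub : (Finset.univ.image (fun u => f u + f (u + c))) ∪
        ((Finset.univ \ ({0, c} : Finset F)).image (fun u => f c + f u + f (u + c))) ⊆
        Finset.univ.erase (0 : F) := by
      intro b hb
      refine Finset.mem_erase.mpr ⟨?_, Finset.mem_univ _⟩
      rintro rfl
      rcases Finset.mem_union.mp hb with hb | hb
      · obtain ⟨u, -, hu⟩ := Finset.mem_image.mp hb
        have : f u = f (u + c) := by linear_combination hu - htwo (f (u + c))
        exact hne2 u (hinj this)
      · obtain ⟨u, hums, hu⟩ := Finset.mem_image.mp hb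
        simp only [Finset.mem_sdiff, Finset.mem_insert, Finset.mem_singleton] at hums
        push_neg at hums
        have heq0 : f u + f (u + c) = f 0 + f (0 + c) := by
          simp only [hf0, zero_add]
          linear_combination hu - htwo (f c)
        rcases hfib c hc u 0 heq0 with h | h
        · exact hums.2.1 h.symm
        · exact hums.2.2 (by linear_combination -h - htwo c)
    have hpos : 0 < 2 ^ m := Nat.pow_pos (by norm_num)
    have hucard : (Finset.univ : Finset F).card = 2 ^ m := by rw [Finset.card_univ, hcard]
    have hecard : (Finset.univ.erase (0 : F)).card = 2 ^ m - 1 := by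
      rw [Finset.card_erase_of_mem (Finset.mem_univ _), Finset.card_univ, hcard]
    have hunioncard := Finset.card_union_of_disjoint hdisjBV
    have hle : (Finset.univ.erase (0 : F)).card ≤
        ((Finset.univ.image (fun u => f u + f (u + c))) ∪
        ((Finset.univ \ ({0, c} : Finset F)).image (fun u => f c + f u + f (u + c)))).card := by
      rw [hecard, hunioncard]
      omega
    have hequ := Finset.eq_of_subset_of_card_le hsub hle
    have hmem : τ ∈ (Finset.univ.image (fun u => f u + f (u + c))) ∪
        ((Finset.univ \ ({0, c} : Finset F)).image (fun u => f c + f u + f (u + c))) := by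
      rw [hequ]
      exact Finset.mem_erase.mpr ⟨hτ, Finset.mem_univ _⟩
    rcases Finset.mem_union.mp hmem with h | h
    · obtain ⟨u, -, hu⟩ := Finset.mem_image.mp h
      exact Or.inl ⟨u, hu⟩
    · obtain ⟨u, hums, hu⟩ := Finset.mem_image.mp h
      simp only [Finset.mem_sdiff, Finset.mem_insert, Finset.mem_singleton] at hums
      push_neg at hums
      exact Or.inr ⟨u, hums.2.1, hums.2.2, hu⟩
  -- realizability of every syndrome
  have hReal : 3 ≤ Fintype.card F → ∀ σ : F, ∃ S T : Finset F,
      ((S, T) : Finset F × Finset F) ∈ preparataCode f ∧ (∑ r ∈ S, r) = σ := by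
    intro h3 σ
    by_cases hσ : σ = 0
    · exact ⟨∅, ∅, hempty, by simp [hσ]⟩
    by_cases hV : ∃ c, c ≠ 0 ∧ ∃ u, u ≠ 0 ∧ u ≠ c ∧ f c + f u + f (u + c) = f σ
    · obtain ⟨c, hc, u, hu0, huc, hval⟩ := hV
      have huuc : u ≠ u + c := hneadd u c hc
      have hRu : u ∉ ({u + c} : Finset F) := by simp [huuc]
      have hRc : c ∉ ({u, u + c} : Finset F) := by
        simp only [Finset.mem_insert, Finset.mem_singleton]
        push_neg
        refine ⟨Ne.symm huc, fun h => hu0 (by linear_combination -h)⟩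
      have hRcardE : ({c, u, u + c} : Finset F).card = 3 := by
        rw [Finset.card_insert_of_notMem hRc, Finset.card_pair huuc]
      have hsumR : (∑ r ∈ ({c, u, u + c} : Finset F), r) = 0 := by
        rw [Finset.sum_insert hRc, Finset.sum_pair huuc]
        linear_combination htwo c + htwo u
      have hsumRf : (∑ r ∈ ({c, u, u + c} : Finset F), f r) = f σ := by
        rw [Finset.sum_insert hRc, Finset.sum_pair huuc]
        linear_combination hval
      refine ⟨{σ}, {σ} ∆ {c, u, u + c}, ?_, Finset.sum_singleton _ _⟩
      simp only [preparataCode, Set.mem_setOf_eq]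
      refine ⟨by simp [Ne.symm hσ], ?_, ?_, ?_⟩
      · have hpar := card_symmDiff_add ({σ} : Finset F) ({c, u, u + c} : Finset F)
        rw [hRcardE, Finset.card_singleton] at hpar
        rw [Nat.even_iff]
        omega
      · rw [Finset.sum_singleton, sum_symmDiff_eq htwo (fun r => r) _ _,
          Finset.sum_singleton, hsumR, add_zero]
      · rw [Finset.sum_singleton, sum_symmDiff_eq htwo f _ _, Finset.sum_singleton, hsumRf]
        linear_combination -htwo (f σ)
    · exfalso
      push_neg at hV
      have hτ : f σ ≠ 0 := fun h => hσ (hinj (by rw [h, hf0]))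
      have hball : ∀ c : F, c ≠ 0 → ∃ u, f u + f (u + c) = f σ := by
        intro c hc
        rcases hBV c hc (f σ) hτ with h | ⟨u, h1, h2, h3'⟩
        · exact h
        · exact absurd h3' (hV c hc u h1 h2)
      have hsel : ∀ c : F, ∃ u, c ≠ 0 → f u + f (u + c) = f σ := by
        intro c
        by_cases hc : c = 0
        · exact ⟨0, fun h => absurd hc h⟩
        · obtain ⟨u, hu⟩ := hball c hc
          exact ⟨u, fun _ => hu⟩
      choose uc huc using hsel
      have hXub : (Finset.univ.filter
          (fun p : F × F => p.1 ≠ 0 ∧ f p.2 + f (p.2 + p.1) = f σ)).card ≤ 2 ^ m := by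
        have hmaps : ∀ p ∈ Finset.univ.filter
            (fun p : F × F => p.1 ≠ 0 ∧ f p.2 + f (p.2 + p.1) = f σ),
            Prod.snd p ∈ (Finset.univ : Finset F) := fun _ _ => Finset.mem_univ _
        have hinjOn : ∀ p ∈ Finset.univ.filter
            (fun p : F × F => p.1 ≠ 0 ∧ f p.2 + f (p.2 + p.1) = f σ),
            ∀ q ∈ Finset.univ.filter
            (fun p : F × F => p.1 ≠ 0 ∧ f p.2 + f (p.2 + p.1) = f σ),
            p.2 = q.2 → p = q := by
          intro p hp q hq hpq
          simp only [Finset.mem_filter] at hp hq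
          have e1 := hp.2.2
          have e2 := hq.2.2
          rw [hpq] at e1
          have h1 : f (q.2 + p.1) = f (q.2 + q.1) := by linear_combination e1 - e2
          have h2 : q.2 + p.1 = q.2 + q.1 := hinj h1
          have : p.1 = q.1 := by linear_combination h2
          exact Prod.ext this hpq
        have := Finset.card_le_card_of_injOn Prod.snd hmaps hinjOn
        rwa [Finset.card_univ, hcard] at this
      have hPsub : ((Finset.univ.erase (0 : F)).biUnion
          (fun c => ({(c, uc c), (c, uc c + c)} : Finset (F × F)))) ⊆
          Finset.univ.filter (fun p : F × F => p.1 ≠ 0 ∧ f p.2 + f (p.2 + p.1) = f σ) := by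
        intro p hp
        simp only [Finset.mem_biUnion, Finset.mem_erase] at hp
        obtain ⟨c, ⟨hc, -⟩, hpm⟩ := hp
        simp only [Finset.mem_insert, Finset.mem_singleton] at hpm
        rcases hpm with rfl | rfl
        · simp only [Finset.mem_filter]
          exact ⟨Finset.mem_univ _, hc, huc c hc⟩
        · simp only [Finset.mem_filter]
          refine ⟨Finset.mem_univ _, hc, ?_⟩
          have harg : uc c + c + c = uc c := by linear_combination htwo c
          show f (uc c + c) + f (uc c + c + c) = f σ
          rw [harg, add_comm]
          exact huc c hc
      have hPcard : ((Finset.univ.erase (0 : F)).biUnion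
          (fun c => ({(c, uc c), (c, uc c + c)} : Finset (F × F)))).card = 2 * (2 ^ m - 1) := by
        rw [Finset.card_biUnion]
        · have hterm : ∀ c ∈ Finset.univ.erase (0 : F),
              (({(c, uc c), (c, uc c + c)} : Finset (F × F))).card = 2 := by
            intro c hc
            refine Finset.card_pair ?_
            intro h
            have h2 := congrArg Prod.snd h
            simp only at h2
            exact hneadd (uc c) c (Finset.mem_erase.mp hc).1 h2
          rw [Finset.sum_congr rfl hterm, Finset.sum_const, smul_eq_mul,
            Finset.card_erase_of_mem (Finset.mem_univ _), Finset.card_univ, hcard, mul_comm]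
        · intro c1 _ c2 _ hne12
          simp only [Finset.disjoint_left, Finset.mem_insert, Finset.mem_singleton]
          rintro p (rfl | rfl) hp2 <;>
            (rcases hp2 with h | h <;> exact hne12 (congrArg Prod.fst h))
      have hle := Finset.card_le_card hPsub
      rw [hPcard] at hle
      have h3' : 3 ≤ 2 ^ m := by rwa [hcard] at h3
      omega
  refine ⟨hf0, hAPN, ?_⟩
  intro x y z a ha heq
  have key : ∀ p q r : F, p ≠ 0 → p ≠ a →
      f p + f q + f r = f (p + a) + f (q + a) + f (r + a) → False := by
    intro p q r hp0 hpa heqv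
    have h3 : 3 ≤ Fintype.card F := by
      have hc3 : ({0, a, p} : Finset F).card = 3 := by
        rw [Finset.card_insert_of_notMem (by simp [Ne.symm ha, Ne.symm hp0]),
          Finset.card_pair (Ne.symm hpa)]
      have := Finset.card_le_univ ({0, a, p} : Finset F)
      rwa [hc3] at this
    obtain ⟨S1, T1, hC1, hs1⟩ := hReal h3 r
    have hC1' := hC1
    simp only [preparataCode, Set.mem_setOf_eq] at hC1'
    obtain ⟨hC10, hC1e, hC1s, hC1f⟩ := hC1'
    have hpa2 : p ≠ p + a := hneadd p a ha
    have hqa2 : q ≠ q + a := hneadd q a ha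
    have hsumP : (∑ x ∈ ({p, p + a} : Finset F), x) = a := by
      rw [Finset.sum_pair hpa2]; linear_combination htwo p
    have hsumQ : (∑ x ∈ ({q, q + a} : Finset F), x) = a := by
      rw [Finset.sum_pair hqa2]; linear_combination htwo q
    have e1 : (∑ x ∈ S1 ∆ ({p, p + a} : Finset F), x) = r + a := by
      rw [sum_symmDiff_eq htwo (fun x => x) _ _, hsumP, hs1]
    have hT1sum : (∑ x ∈ T1, x) = r := by rw [← hC1s, hs1]
    have e2 : (∑ x ∈ T1 ∆ ({q, q + a} : Finset F), x) = r + a := by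
      rw [sum_symmDiff_eq htwo (fun x => x) _ _, hsumQ, hT1sum]
    have hC2 : ((S1 ∆ {p, p + a}, T1 ∆ {q, q + a}) : Finset F × Finset F) ∈ preparataCode f := by
      simp only [preparataCode, Set.mem_setOf_eq]
      refine ⟨?_, ?_, ?_, ?_⟩
      · intro h0
        rcases Finset.mem_symmDiff.mp h0 with ⟨h01, -⟩ | ⟨h02, -⟩
        · exact hC10 h01
        · rcases Finset.mem_insert.mp h02 with h | h
          · exact hp0 h.symm
          · rw [Finset.mem_singleton] at h
            exact hpa (by linear_combination -h - htwo a)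
      · have hpar := card_symmDiff_add T1 ({q, q + a} : Finset F)
        rw [Finset.card_pair hqa2] at hpar
        rw [Nat.even_iff]
        rw [Nat.even_iff] at hC1e
        omega
      · rw [e1, e2]
      · rw [e1, sum_symmDiff_eq htwo f _ _, sum_symmDiff_eq htwo f _ _,
          Finset.sum_pair hpa2, Finset.sum_pair hqa2]
        rw [hs1] at hC1f
        linear_combination hC1f + heqv + htwo (f (r + a)) - htwo (f p) - htwo (f q) - htwo (f r)
    have hne : ((S1, T1) : Finset F × Finset F) ≠ (S1 ∆ {p, p + a}, T1 ∆ {q, q + a}) := by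
      intro h
      have hfst : S1 = S1 ∆ {p, p + a} := congrArg Prod.fst h
      have h0 : ({p, p + a} : Finset F) = ⊥ := symmDiff_eq_left.mp hfst.symm
      rw [Finset.bot_eq_empty] at h0
      exact Finset.insert_ne_empty _ _ h0
    have h5 := hdist _ hC1 _ hC2 hne
    have hd1 : S1 ∆ (S1 ∆ ({p, p + a} : Finset F)) = {p, p + a} :=
      symmDiff_symmDiff_cancel_left S1 _
    have hd2 : T1 ∆ (T1 ∆ ({q, q + a} : Finset F)) = {q, q + a} :=
      symmDiff_symmDiff_cancel_left T1 _
    simp only at h5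
    rw [hd1, hd2, Finset.card_pair hpa2, Finset.card_pair hqa2] at h5
    omega
  by_cases hx : x ≠ 0 ∧ x ≠ a
  · exact key x y z hx.1 hx.2 heq
  by_cases hy : y ≠ 0 ∧ y ≠ a
  · exact key y x z hy.1 hy.2 (by linear_combination heq)
  by_cases hz : z ≠ 0 ∧ z ≠ a
  · exact key z x y hz.1 hz.2 (by linear_combination heq)
  simp only [not_and_or, not_ne_iff] at hx hy hz
  rcases hx with rfl | rfl <;> rcases hy with rfl | rfl <;> rcases hz with rfl | rfl <;>
    simp only [htwo, hf0, zero_add, add_zero] at heq <;>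
    exact ha (hinj (by rw [hf0]; first | linear_combination heq | linear_combination -heq))
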